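/- For Vein's oscillator dynamical system x' = v, v' = -h₂(x)v - h₃(x), with h₂(x) = 3(ax+b²)/(bx+a²)³ and h₃(x) = (x³-3abx-a³-b³)/(bx+a²)⁵, assume a ≠ b and b(a+b)+a² ≠ 0. Then (a+b, 0) is an equilibrium point, and the linearization there has trace -δ₁ᵣ and determinant δ₂ᵣ with δ₁ᵣ = -3/(a²+ab+b²)² < 0, δ₂ᵣ = 3/(a²+ab+b²)⁴ > 0, and discriminant Δᵣ = δ₁ᵣ² - 4δ₂ᵣ = -δ₂ᵣ < 0, so the eigenvalues of the Jacobian are (√3/(2(a²+ab+b²)²))(-√3 ± i); in particular (a+b,0) is a stable spiral. -/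

import Mathlib

noncomputable def h2 (a b x : ℝ) : ℝ := 3 * (a * x + b ^ 2) / (b * x + a ^ 2) ^ 3

noncomputable def h3 (a b x : ℝ) : ℝ :=
  (x ^ 3 - 3 * a * b * x - a ^ 3 - b ^ 3) / (b * x + a ^ 2) ^ 5

theorem vein_oscillator_real_fixed_point
    (a b : ℝ) (hab : a ≠ b) (hden : b * (a + b) + a ^ 2 ≠ 0) :
    let δ1r : ℝ := -3 / (a ^ 2 + a * b + b ^ 2) ^ 2
    let δ2r : ℝ := 3 / (a ^ 2 + a * b + b ^ 2) ^ 4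
    let J : Matrix (Fin 2) (Fin 2) ℝ :=
      !![0, 1; -deriv (h3 a b) (a + b), -h2 a b (a + b)]
    -- (a+b, 0) is an equilibrium point
    (h3 a b (a + b) = 0) ∧
    -- trace and determinant of the linearization
    (Matrix.trace J = δ1r) ∧ (Matrix.det J = δ2r) ∧
    (δ1r < 0) ∧ (0 < δ2r) ∧
    -- discriminant
    (δ1r ^ 2 - 4 * δ2r = -δ2r) ∧ (-δ2r < 0) ∧
    -- eigenvalues of the Jacobian
    (∀ lam : ℂ,
      (lam = (Real.sqrt 3 / (2 * (a ^ 2 + a * b + b ^ 2) ^ 2) : ℝ) * (-(Real.sqrt 3 : ℂ) + Complex.I) ∨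
       lam = (Real.sqrt 3 / (2 * (a ^ 2 + a * b + b ^ 2) ^ 2) : ℝ) * (-(Real.sqrt 3 : ℂ) - Complex.I)) →
      lam ^ 2 + (h2 a b (a + b) : ℂ) * lam + ((deriv (h3 a b) (a + b) : ℝ) : ℂ) = 0 ∧ lam.re < 0) := by
  intro δ1r δ2r J
  have hab' : a - b ≠ 0 := sub_ne_zero.mpr hab
  have hs : 0 < a ^ 2 + a * b + b ^ 2 := by
    nlinarith [sq_nonneg (a + b), pow_pos (abs_pos.mpr hab') 2, sq_abs (a - b),
      sq_nonneg (a - b)]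
  set s : ℝ := a ^ 2 + a * b + b ^ 2 with hsdef
  have hsne : s ≠ 0 := ne_of_gt hs
  have hDen : b * (a + b) + a ^ 2 = s := by ring
  -- h3 at a+b
  have hnum : (a + b) ^ 3 - 3 * a * b * (a + b) - a ^ 3 - b ^ 3 = 0 := by ring
  have hh3 : h3 a b (a + b) = 0 := by
    unfold h3; rw [hnum]; simp
  -- h2 at a+b
  have hh2 : h2 a b (a + b) = 3 / s ^ 2 := by
    unfold h2
    rw [hDen]
    rw [show a * (a + b) + b ^ 2 = s by ring]
    rw [pow_succ, pow_two]
    field_simp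
  -- derivative of h3 at a+b
  have hN : HasDerivAt (fun x : ℝ => x ^ 3 - 3 * a * b * x - a ^ 3 - b ^ 3)
      (3 * (a + b) ^ 2 - 3 * a * b) (a + b) := by
    have h1 : HasDerivAt (fun x : ℝ => x ^ 3) (3 * (a + b) ^ 2) (a + b) := by
      simpa using hasDerivAt_pow 3 (a + b)
    have h2 : HasDerivAt (fun x : ℝ => 3 * a * b * x) (3 * a * b) (a + b) := by
      simpa using (hasDerivAt_id (a + b)).const_mul (3 * a * b)
    simpa using ((h1.sub h2).sub_const (a ^ 3)).sub_const (b ^ 3)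
  have hDbase : HasDerivAt (fun x : ℝ => b * x + a ^ 2) b (a + b) := by
    simpa using ((hasDerivAt_id (a + b)).const_mul b).add_const (a ^ 2)
  have hD : HasDerivAt (fun x : ℝ => (b * x + a ^ 2) ^ 5)
      (5 * (b * (a + b) + a ^ 2) ^ 4 * b) (a + b) := by
    simpa using hDbase.fun_pow 5
  have hDne : (b * (a + b) + a ^ 2) ^ 5 ≠ 0 := pow_ne_zero 5 hden
  have hdiv : HasDerivAt (h3 a b)
      (((3 * (a + b) ^ 2 - 3 * a * b) * (b * (a + b) + a ^ 2) ^ 5 -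
        ((a + b) ^ 3 - 3 * a * b * (a + b) - a ^ 3 - b ^ 3) *
          (5 * (b * (a + b) + a ^ 2) ^ 4 * b)) /
        ((b * (a + b) + a ^ 2) ^ 5) ^ 2) (a + b) := by
    exact hN.div hD hDne
  have hderiv : deriv (h3 a b) (a + b) = 3 / s ^ 4 := by
    rw [hdiv.deriv, hnum, hDen]
    rw [show 3 * (a + b) ^ 2 - 3 * a * b = 3 * s by ring]
    rw [← pow_mul]
    field_simp
    ring
  refine ⟨hh3, ?_, ?_, ?_, ?_, ?_, ?_, ?_⟩
  · show Matrix.trace J = δ1r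
    simp only [J, Matrix.trace_fin_two_of, hh2, δ1r]
    ring
  · show Matrix.det J = δ2r
    simp only [J, Matrix.det_fin_two_of, hderiv, δ2r]
    ring
  · show δ1r < 0
    have : (0:ℝ) < s ^ 2 := by positivity
    simp only [δ1r]
    exact div_neg_of_neg_of_pos (by norm_num) this
  · show 0 < δ2r
    positivity
  · show δ1r ^ 2 - 4 * δ2r = -δ2r
    simp only [δ1r, δ2r]
    field_simp
    ring
  · show -δ2r < 0
    simp only [δ2r]
    have : (0:ℝ) < 3 / s ^ 4 := by positivity
    linarith
  · intro lam h
    rw [hh2, hderiv]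
    have ht : ((Real.sqrt 3 : ℝ) : ℂ) ^ 2 = 3 := by
      rw [← Complex.ofReal_pow, Real.sq_sqrt (by norm_num : (0:ℝ) ≤ 3)]; norm_num
    have hsc : ((s : ℝ) : ℂ) ≠ 0 := by exact_mod_cast hsne
    have hI : Complex.I ^ 2 = -1 := Complex.I_sq
    have hsq3 : Real.sqrt 3 * Real.sqrt 3 = 3 := Real.mul_self_sqrt (by norm_num)
    have h32 : (0:ℝ) < 3 / (2 * s ^ 2) := by positivity
    rcases h with rfl | rfl <;> constructor
    · push_cast
      linear_combination ((((Real.sqrt 3:ℝ):ℂ)^2 - 2*((Real.sqrt 3:ℝ):ℂ)*Complex.I + Complex.I^2 - 3)/(4*((s:ℝ):ℂ)^4)) * ht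
        + (3/(4*((s:ℝ):ℂ)^4)) * hI
    · simp only [Complex.mul_re, Complex.add_re, Complex.add_im, Complex.neg_re, Complex.neg_im,
        Complex.I_re, Complex.I_im, Complex.ofReal_re, Complex.ofReal_im]
      have he : Real.sqrt 3/(2*s^2)*(-Real.sqrt 3+0) - 0*(-0+1)
          = -(Real.sqrt 3*Real.sqrt 3/(2*s^2)) := by ring
      rw [he, hsq3]; linarith
    · push_cast
      linear_combination ((((Real.sqrt 3:ℝ):ℂ)^2 + 2*((Real.sqrt 3:ℝ):ℂ)*Complex.I + Complex.I^2 - 3)/(4*((s:ℝ):ℂ)^4)) * ht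
        + (3/(4*((s:ℝ):ℂ)^4)) * hI
    · simp only [Complex.mul_re, Complex.sub_re, Complex.sub_im, Complex.neg_re, Complex.neg_im,
        Complex.I_re, Complex.I_im, Complex.ofReal_re, Complex.ofReal_im]
      have he : Real.sqrt 3/(2*s^2)*(-Real.sqrt 3-0) - 0*(-0-1)
          = -(Real.sqrt 3*Real.sqrt 3/(2*s^2)) := by ring
      rw [he, hsq3]; linarith
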